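/- Let J : ℝ^d → [0,∞) be measurable with min J = 0, and suppose there exist polynomials with positive exponents Poly_l(t) = ∑_{k=0}^M c_k^l t^{α_k} and Poly_u(t) = ∑_{k=0}^M c_k^u t^{α_k}, with 0 < α_0 < ... < α_M, c_k^l = 0 iff c_k^u = 0, such that Poly_l(t) ≤ V_J(t) ≤ Poly_u(t) for all t ≥ 0, where V_J(t) = vol{Y : J(Y) ≤ t}. Assume moreover V_J is absolutely continuous and the Gibbs normalizer ∫ exp(-J(Y)/λ) dY is finite for all small λ > 0. Then for random variables Y_λ with density proportional to exp(-J(Y)/λ), J(Y_λ) → 0 in probability as λ → 0; i.e., for all ε, δ > 0 there exists λ_0 > 0 such that for all 0 < λ ≤ λ_0, P(J(Y_λ) ≤ ε) ≥ 1 - δ. -/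

import Mathlib

open MeasureTheory

theorem stmt19 (d : ℕ) (J : EuclideanSpace ℝ (Fin d) → ℝ) (hJmeas : Measurable J)
    (hJ0 : ∀ Y, 0 ≤ J Y) (hmin : ∃ Y, J Y = 0)
    (M : ℕ) (α cl cu : Fin (M + 1) → ℝ)
    (hα0 : 0 < α 0) (hαmono : StrictMono α)
    (hcl : ∀ k, 0 ≤ cl k) (hle : ∀ k, cl k ≤ cu k)
    (hzero : ∀ k, cl k = 0 ↔ cu k = 0)
    (hbound : ∀ t : ℝ, 0 ≤ t →
      ENNReal.ofReal (∑ k, cl k * t ^ α k) ≤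
          volume {Y : EuclideanSpace ℝ (Fin d) | J Y ≤ t} ∧
        volume {Y : EuclideanSpace ℝ (Fin d) | J Y ≤ t} ≤
          ENNReal.ofReal (∑ k, cu k * t ^ α k))
    (f : ℝ → ℝ) (hfmeas : Measurable f) (hfnn : ∀ x, 0 ≤ f x)
    (hac : ∀ t : ℝ, 0 ≤ t →
      (volume {Y : EuclideanSpace ℝ (Fin d) | J Y ≤ t}).toReal = ∫ x in (0 : ℝ)..t, f x)
    (lam1 : ℝ) (hlam1 : 0 < lam1)
    (hInt : ∀ lam ∈ Set.Ioc (0 : ℝ) lam1,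
      Integrable fun Y : EuclideanSpace ℝ (Fin d) => Real.exp (-J Y / lam)) :
    ∀ ε > (0 : ℝ), ∀ δ > (0 : ℝ), ∃ lam0 > (0 : ℝ), ∀ lam : ℝ, 0 < lam → lam ≤ lam0 →
      1 - δ ≤
        ((volume.withDensity fun Y : EuclideanSpace ℝ (Fin d) =>
            ENNReal.ofReal (Real.exp (-J Y / lam) /
              ∫ X : EuclideanSpace ℝ (Fin d), Real.exp (-J X / lam)))
          {Y | J Y ≤ ε}).toReal := by
  intro ε hε δ hδ
  -- measurability of sublevel sets
  have hS : ∀ t : ℝ, MeasurableSet {Y : EuclideanSpace ℝ (Fin d) | J Y ≤ t} :=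
    fun t => hJmeas measurableSet_Iic
  -- there is a positive lower coefficient
  obtain ⟨k0, hk0⟩ : ∃ k, 0 < cl k := by
    by_contra h
    push_neg at h
    have hcl0 : ∀ k, cl k = 0 := fun k => le_antisymm (h k) (hcl k)
    have hvol : ∀ n : ℕ, volume {Y : EuclideanSpace ℝ (Fin d) | J Y ≤ (n : ℝ)} = 0 := by
      intro n
      have h2 := (hbound n (Nat.cast_nonneg n)).2
      have hsum : ∑ k, cu k * (n : ℝ) ^ α k = 0 := by
        apply Finset.sum_eq_zero
        intro k _
        rw [(hzero k).mp (hcl0 k)]; ring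
      rw [hsum, ENNReal.ofReal_zero] at h2
      exact le_antisymm h2 (zero_le)
    have hcover : (Set.univ : Set (EuclideanSpace ℝ (Fin d))) ⊆
        ⋃ n : ℕ, {Y | J Y ≤ (n : ℝ)} := by
      intro Y _
      obtain ⟨n, hn⟩ := exists_nat_ge (J Y)
      exact Set.mem_iUnion.mpr ⟨n, hn⟩
    have huniv : volume (Set.univ : Set (EuclideanSpace ℝ (Fin d))) = 0 :=
      le_antisymm ((measure_mono hcover).trans (measure_iUnion_null hvol).le) (zero_le)
    exact absurd huniv (isOpen_univ.measure_pos volume Set.univ_nonempty).ne'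
  set a := α k0 with ha
  -- finiteness of sublevel volumes
  have hvol_fin : ∀ t : ℝ, 0 ≤ t →
      volume {Y : EuclideanSpace ℝ (Fin d) | J Y ≤ t} ≠ ⊤ :=
    fun t ht => ne_top_of_le_ne_top ENNReal.ofReal_ne_top (hbound t ht).2
  -- lower bound on sublevel volumes
  have hvol_lb : ∀ t : ℝ, 0 ≤ t →
      cl k0 * t ^ a ≤ (volume {Y : EuclideanSpace ℝ (Fin d) | J Y ≤ t}).toReal := by
    intro t ht
    have hnn : ∀ k ∈ Finset.univ, 0 ≤ cl k * t ^ α k :=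
      fun k _ => mul_nonneg (hcl k) (Real.rpow_nonneg ht _)
    have hsum_nn : 0 ≤ ∑ k, cl k * t ^ α k := Finset.sum_nonneg hnn
    have h1 : ∑ k, cl k * t ^ α k ≤
        (volume {Y : EuclideanSpace ℝ (Fin d) | J Y ≤ t}).toReal := by
      rw [← ENNReal.toReal_ofReal hsum_nn]
      exact ENNReal.toReal_mono (hvol_fin t ht) (hbound t ht).1
    have h2 : cl k0 * t ^ a ≤ ∑ k, cl k * t ^ α k :=
      Finset.single_le_sum hnn (Finset.mem_univ k0)
    linarith
  -- lower bound on the normalizer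
  have hZ_lb : ∀ lam : ℝ, 0 < lam → lam ≤ lam1 →
      Real.exp (-1) * (cl k0 * lam ^ a) ≤
        ∫ X : EuclideanSpace ℝ (Fin d), Real.exp (-J X / lam) := by
    intro lam h1 h2
    have hint := hInt lam ⟨h1, h2⟩
    have hfin := hvol_fin lam h1.le
    have step1 : ∫ X in {Y : EuclideanSpace ℝ (Fin d) | J Y ≤ lam}, Real.exp (-1) ≤
        ∫ X in {Y : EuclideanSpace ℝ (Fin d) | J Y ≤ lam}, Real.exp (-J X / lam) := by
      apply setIntegral_mono_on
      · exact integrableOn_const hfin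
      · exact hint.integrableOn
      · exact hS lam
      · intro X hX
        apply Real.exp_le_exp.mpr
        have hd : J X / lam ≤ 1 := (div_le_one h1).mpr hX
        rw [neg_div]
        linarith
    have step2 : ∫ X in {Y : EuclideanSpace ℝ (Fin d) | J Y ≤ lam}, Real.exp (-J X / lam) ≤
        ∫ X : EuclideanSpace ℝ (Fin d), Real.exp (-J X / lam) :=
      setIntegral_le_integral hint (Filter.Eventually.of_forall fun X => (Real.exp_pos _).le)
    rw [setIntegral_const, smul_eq_mul, measureReal_def] at step1
    have h3 := hvol_lb lam h1.le
    nlinarith [Real.exp_pos (-1 : ℝ)]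
  -- tail upper bound
  have hT_ub : ∀ lam : ℝ, 0 < lam → 2 * lam ≤ lam1 →
      ∫ X in {Y : EuclideanSpace ℝ (Fin d) | J Y ≤ ε}ᶜ, Real.exp (-J X / lam) ≤
        Real.exp (-ε / (2 * lam)) *
          ∫ X : EuclideanSpace ℝ (Fin d), Real.exp (-J X / lam1) := by
    intro lam h1 h2
    have hint := hInt lam ⟨h1, by linarith⟩
    have hint1 := hInt lam1 ⟨hlam1, le_refl _⟩
    have e0 : (0 : ℝ) < 2 * lam := by linarith
    have step : ∫ X in {Y : EuclideanSpace ℝ (Fin d) | J Y ≤ ε}ᶜ, Real.exp (-J X / lam) ≤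
        ∫ X in {Y : EuclideanSpace ℝ (Fin d) | J Y ≤ ε}ᶜ,
          Real.exp (-ε / (2 * lam)) * Real.exp (-J X / lam1) := by
      apply setIntegral_mono_on hint.integrableOn ((hint1.const_mul _).integrableOn)
        (hS ε).compl
      intro X hX
      have hJX : ε < J X := lt_of_not_ge hX
      rw [← Real.exp_add]
      apply Real.exp_le_exp.mpr
      have hsplit : -J X / lam = -J X / (2 * lam) + -J X / (2 * lam) := by
        field_simp
        ring
      have e1 : -J X / (2 * lam) ≤ -ε / (2 * lam) := by gcongr <;> linarith
      have e2 : -J X / (2 * lam) ≤ -J X / lam1 := by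
        have := div_le_div_of_nonneg_left (hJ0 X) e0 h2
        rw [neg_div, neg_div]
        linarith
      linarith
    rw [integral_const_mul] at step
    refine step.trans ?_
    apply mul_le_mul_of_nonneg_left _ (Real.exp_pos _).le
    exact setIntegral_le_integral hint1
      (Filter.Eventually.of_forall fun X => (Real.exp_pos _).le)
  set C := ∫ X : EuclideanSpace ℝ (Fin d), Real.exp (-J X / lam1) with hC
  have hC0 : 0 ≤ C := integral_nonneg fun X => (Real.exp_pos _).le
  have hC1 : (0 : ℝ) < C + 1 := by linarith
  -- calibration via exponential beating polynomial
  set K := δ * cl k0 * Real.exp (-1) / (C + 1) with hKdef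
  have hK : 0 < K := by positivity
  have htend := tendsto_rpow_mul_exp_neg_mul_atTop_nhds_zero a (ε / 2) (by positivity)
  have hev : ∀ᶠ x in Filter.atTop, x ^ a * Real.exp (-(ε / 2) * x) < K :=
    htend.eventually (gt_mem_nhds hK)
  obtain ⟨x0, hx0⟩ := Filter.eventually_atTop.mp hev
  set x1 := max x0 (2 / lam1) with hx1def
  have hx1 : 0 < x1 := lt_max_of_lt_right (by positivity)
  refine ⟨1 / x1, by positivity, ?_⟩
  intro lam hlam hlamle
  have h2l : 2 * lam ≤ lam1 := by
    have h1 : (1 : ℝ) / x1 ≤ 1 / (2 / lam1) :=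
      one_div_le_one_div_of_le (by positivity) (le_max_right _ _)
    rw [one_div_div] at h1
    linarith
  have hxle : x1 ≤ 1 / lam := by
    rw [le_div_iff₀ hlam]
    have := (le_div_iff₀ hx1).mp hlamle
    linarith [mul_comm x1 lam, this]
  have hkey := hx0 (1 / lam) (le_trans (le_max_left _ _) hxle)
  -- main computation
  set Z := ∫ X : EuclideanSpace ℝ (Fin d), Real.exp (-J X / lam) with hZdef
  have hZlb := hZ_lb lam hlam (by linarith)
  have hPpos : 0 < lam ^ a := Real.rpow_pos_of_pos hlam a
  have hZpos : 0 < Z := by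
    refine lt_of_lt_of_le ?_ hZlb
    positivity
  have hint := hInt lam ⟨hlam, by linarith⟩
  have hginteg : Integrable (fun Y : EuclideanSpace ℝ (Fin d) =>
      Real.exp (-J Y / lam) / Z) volume := hint.div_const Z
  have hgnn : ∀ Y : EuclideanSpace ℝ (Fin d), 0 ≤ Real.exp (-J Y / lam) / Z :=
    fun Y => div_nonneg (Real.exp_pos _).le hZpos.le
  have hmeas_eq : ((volume.withDensity fun Y : EuclideanSpace ℝ (Fin d) =>
      ENNReal.ofReal (Real.exp (-J Y / lam) / Z)) {Y | J Y ≤ ε}).toReal =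
      ∫ X in {Y : EuclideanSpace ℝ (Fin d) | J Y ≤ ε}, Real.exp (-J X / lam) / Z := by
    rw [withDensity_apply _ (hS ε),
      ← ofReal_integral_eq_lintegral_ofReal hginteg.restrict
        (Filter.Eventually.of_forall hgnn),
      ENNReal.toReal_ofReal (integral_nonneg hgnn)]
  rw [hmeas_eq, integral_div]
  set T := ∫ X in {Y : EuclideanSpace ℝ (Fin d) | J Y ≤ ε}ᶜ, Real.exp (-J X / lam) with hT
  have hsplit : ∫ X in {Y : EuclideanSpace ℝ (Fin d) | J Y ≤ ε}, Real.exp (-J X / lam)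
      = Z - T := by
    have := integral_add_compl (hS ε) hint
    rw [← hZdef] at this
    linarith
  rw [hsplit]
  -- final inequality
  have hTub := hT_ub lam hlam h2l
  have hEE : Real.exp (-ε / (2 * lam)) = Real.exp (-(ε / 2) * (1 / lam)) := by
    congr 1
    field_simp
  have hPeq : lam ^ a = ((1 / lam) ^ a)⁻¹ := by
    rw [one_div, Real.inv_rpow hlam.le, inv_inv]
  have hxa : 0 < (1 / lam) ^ a := Real.rpow_pos_of_pos (by positivity) a
  have hElt : Real.exp (-ε / (2 * lam)) < K * lam ^ a := by
    rw [hEE, hPeq, ← div_eq_mul_inv, lt_div_iff₀ hxa, mul_comm]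
    exact hkey
  have hKC : K * C ≤ δ * cl k0 * Real.exp (-1) := by
    rw [hKdef, div_mul_eq_mul_div, div_le_iff₀ hC1]
    nlinarith [Real.exp_pos (-1 : ℝ), mul_pos hδ hk0]
  have hTδZ : T ≤ δ * Z := by
    calc T ≤ Real.exp (-ε / (2 * lam)) * C := hTub
      _ ≤ (K * lam ^ a) * C := mul_le_mul_of_nonneg_right hElt.le hC0
      _ = (K * C) * lam ^ a := by ring
      _ ≤ (δ * cl k0 * Real.exp (-1)) * lam ^ a :=
        mul_le_mul_of_nonneg_right hKC hPpos.le
      _ = δ * (Real.exp (-1) * (cl k0 * lam ^ a)) := by ring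
      _ ≤ δ * Z := mul_le_mul_of_nonneg_left hZlb hδ.le
  have hfrac : T / Z ≤ δ := (div_le_iff₀ hZpos).mpr (by linarith)
  rw [sub_div, div_self hZpos.ne']
  linarith
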